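/- Let M, N be positive natural numbers and let d be a dataset of N instances with M binary protected attributes, where each instance carries both a true binary label and a predicted binary label. Suppose every vertex (level-0 hypercube) contains at least one instance, and suppose at least one instance is correctly classified (true label equals predicted label). Then the worst-case accuracy ratio Acc_ratio(K) = Acc_min(K)/Acc_max(K) is monotonically increasing in K, and the worst-case accuracy difference Acc_diff(K) = Acc_max(K) − Acc_min(K) is monotonically decreasing in K: for every K with 1 ≤ K ≤ M, Acc_ratio(K-1) ≤ Acc_ratio(K) and Acc_diff(K) ≤ Acc_diff(K-1). -/

import Mathlib

/-- An attribute vector `v` belongs to the hypercube `x` if it matches all specified coordinates. -/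
def Belongs {M : ℕ} (x : Fin M → Option Bool) (v : Fin M → Bool) : Prop :=
  ∀ i : Fin M, ∀ b : Bool, x i = some b → v i = b

instance {M : ℕ} (x : Fin M → Option Bool) (v : Fin M → Bool) : Decidable (Belongs x v) := by
  unfold Belongs; infer_instance

/-- The level of a hypercube: the number of its stars (unspecified coordinates). -/
def level {M : ℕ} (x : Fin M → Option Bool) : ℕ :=
  (Finset.univ.filter fun i => x i = none).card

/-- The finset of all hypercubes of level `K`. -/
def levelSet (M K : ℕ) : Finset (Fin M → Option Bool) :=
  Finset.univ.filter fun x => level x = K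

/-- N(x): the number of instances of the dataset `d` (with true and predicted labels)
whose attribute vector belongs to `x`. -/
def cnt {M N : ℕ} (d : Fin N → (Fin M → Bool) × Bool × Bool) (x : Fin M → Option Bool) : ℕ :=
  (Finset.univ.filter fun n => Belongs x (d n).1).card

/-- The number of correctly classified instances (true label = predicted label) in `x`. -/
def cntCorrect {M N : ℕ} (d : Fin N → (Fin M → Bool) × Bool × Bool)
    (x : Fin M → Option Bool) : ℕ :=
  (Finset.univ.filter fun n => Belongs x (d n).1 ∧ (d n).2.1 = (d n).2.2).card

/-- The accuracy of hypercube `x`: Acc(x) = (number of correct instances in x)/N(x). -/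
def accuracy {M N : ℕ} (d : Fin N → (Fin M → Bool) × Bool × Bool)
    (x : Fin M → Option Bool) : ℚ :=
  (cntCorrect d x : ℚ) / (cnt d x : ℚ)

/-- Acc_min(K): minimum accuracy over all hypercubes of level `K`
(the level set is nonempty whenever `K ≤ M`, so the junk value `0` is never used there). -/
def accuracyMin {M N : ℕ} (d : Fin N → (Fin M → Bool) × Bool × Bool) (K : ℕ) : ℚ :=
  WithTop.untopD 0 (((levelSet M K).image (accuracy d)).min)

/-- Acc_max(K): maximum accuracy over all hypercubes of level `K`. -/
def accuracyMax {M N : ℕ} (d : Fin N → (Fin M → Bool) × Bool × Bool) (K : ℕ) : ℚ :=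
  WithBot.unbotD 0 (((levelSet M K).image (accuracy d)).max)

/-- The worst-case accuracy ratio at level K. -/
def accuracyRatio {M N : ℕ} (d : Fin N → (Fin M → Bool) × Bool × Bool) (K : ℕ) : ℚ :=
  accuracyMin d K / accuracyMax d K

/-- The worst-case accuracy difference at level K. -/
def accuracyDiff {M N : ℕ} (d : Fin N → (Fin M → Bool) × Bool × Bool) (K : ℕ) : ℚ :=
  accuracyMax d K - accuracyMin d K

lemma belongs_update_some {M : ℕ} (x : Fin M → Option Bool) (i : Fin M) (hx : x i = none)
    (b : Bool) (v : Fin M → Bool) :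
    Belongs (Function.update x i (some b)) v ↔ Belongs x v ∧ v i = b := by
  constructor
  · intro h
    refine ⟨fun j b' hj => ?_, ?_⟩
    · have hji : j ≠ i := by rintro rfl; rw [hx] at hj; cases hj
      exact h j b' (by rwa [Function.update_of_ne hji])
    · exact h i b (by simp)
  · rintro ⟨h, hv⟩ j b' hj
    by_cases hji : j = i
    · subst hji; rw [Function.update_self] at hj; cases hj; exact hv
    · rw [Function.update_of_ne hji] at hj; exact h j b' hj

lemma level_update_some {M : ℕ} (x : Fin M → Option Bool) (i : Fin M) (hx : x i = none)
    (b : Bool) : level (Function.update x i (some b)) + 1 = level x := by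
  unfold level
  have he : (Finset.univ.filter fun j => Function.update x i (some b) j = none)
      = (Finset.univ.filter fun j => x j = none).erase i := by
    ext j
    by_cases hj : j = i <;> simp [Finset.mem_erase, Function.update_apply, hj]
  rw [he, Finset.card_erase_add_one (by simp [hx])]

lemma belongs_update_none {M : ℕ} (x : Fin M → Option Bool) (i : Fin M) (v : Fin M → Bool)
    (h : Belongs x v) : Belongs (Function.update x i none) v := by
  intro j b hj
  by_cases hji : j = i
  · subst hji; rw [Function.update_self] at hj; cases hj
  · rw [Function.update_of_ne hji] at hj; exact h j b hj

lemma level_update_none {M : ℕ} (x : Fin M → Option Bool) (i : Fin M) (b : Bool)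
    (hx : x i = some b) : level (Function.update x i none) = level x + 1 := by
  unfold level
  have he : (Finset.univ.filter fun j => Function.update x i none j = none)
      = insert i (Finset.univ.filter fun j => x j = none) := by
    ext j
    by_cases hj : j = i <;> simp [Function.update_apply, hj]
  rw [he, Finset.card_insert_of_notMem (by simp [hx])]

lemma exists_containing (M K : ℕ) (hKM : K ≤ M) (v : Fin M → Bool) :
    ∃ x : Fin M → Option Bool, level x = K ∧ Belongs x v := by
  induction K with
  | zero =>
    exact ⟨fun i => some (v i), by simp [level], fun i b h => by simpa using h⟩
  | succ K ih =>
    obtain ⟨x, hx, hb⟩ := ih (by omega)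
    have hi : ∃ i, x i ≠ none := by
      by_contra hno
      push_neg at hno
      have : (Finset.univ.filter fun j => x j = none) = Finset.univ := by
        apply Finset.filter_true_of_mem; intro j _; exact hno j
      rw [level, this, Finset.card_univ, Fintype.card_fin] at hx
      omega
    obtain ⟨i, hi⟩ := hi
    obtain ⟨b, hbx⟩ := Option.ne_none_iff_exists'.mp hi
    exact ⟨Function.update x i none, by rw [level_update_none x i b hbx, hx],
      belongs_update_none x i v hb⟩

lemma levelSet_nonempty (M K : ℕ) (hKM : K ≤ M) : (levelSet M K).Nonempty := by
  obtain ⟨x, hx, _⟩ := exists_containing M K hKM (fun _ => false)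
  exact ⟨x, by simp [levelSet, hx]⟩

lemma cnt_pos_of_vert {M N : ℕ} (d : Fin N → (Fin M → Bool) × Bool × Bool)
    (hvert : ∀ v : Fin M → Bool, 0 < cnt d (fun i => some (v i)))
    (x : Fin M → Option Bool) : 0 < cnt d x := by
  set v : Fin M → Bool := fun i => (x i).getD false with hv
  have hsub : ∀ n : Fin N, Belongs (fun i => some (v i)) (d n).1 → Belongs x (d n).1 := by
    intro n h j b hj
    have h2 := h j (v j) rfl
    rw [h2, hv]; simp [hj]
  calc 0 < cnt d (fun i => some (v i)) := hvert v
    _ ≤ cnt d x := Finset.card_le_card (Finset.monotone_filter_right _ (fun n _ => hsub n))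

lemma filter_belongs_split {M N : ℕ} (d : Fin N → (Fin M → Bool) × Bool × Bool)
    (Q : Fin N → Prop) [DecidablePred Q] (x : Fin M → Option Bool) (i : Fin M)
    (hx : x i = none) :
    (Finset.univ.filter fun n => Belongs x (d n).1 ∧ Q n).card
      = (Finset.univ.filter fun n =>
          Belongs (Function.update x i (some false)) (d n).1 ∧ Q n).card
      + (Finset.univ.filter fun n =>
          Belongs (Function.update x i (some true)) (d n).1 ∧ Q n).card := by
  have h1 : ∀ (b : Bool) (n : Fin N), (Belongs (Function.update x i (some b)) (d n).1 ∧ Q n) ↔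
      ((Belongs x (d n).1 ∧ Q n) ∧ (d n).1 i = b) := by
    intro b n; rw [belongs_update_some x i hx]; tauto
  have e0 : (Finset.univ.filter fun n =>
      Belongs (Function.update x i (some false)) (d n).1 ∧ Q n)
      = (Finset.univ.filter fun n => Belongs x (d n).1 ∧ Q n).filter
          (fun n => (d n).1 i = false) := by
    rw [Finset.filter_filter]
    exact Finset.filter_congr (fun n _ => h1 false n)
  have e1 : (Finset.univ.filter fun n =>
      Belongs (Function.update x i (some true)) (d n).1 ∧ Q n)
      = (Finset.univ.filter fun n => Belongs x (d n).1 ∧ Q n).filter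
          (fun n => ¬ ((d n).1 i = false)) := by
    rw [Finset.filter_filter]
    refine Finset.filter_congr (fun n _ => ?_)
    rw [h1 true n]
    simp
  rw [e0, e1, Finset.card_filter_add_card_filter_not]

lemma cnt_split {M N : ℕ} (d : Fin N → (Fin M → Bool) × Bool × Bool)
    (x : Fin M → Option Bool) (i : Fin M) (hx : x i = none) :
    cnt d x = cnt d (Function.update x i (some false))
      + cnt d (Function.update x i (some true)) := by
  have h := filter_belongs_split d (fun _ => True) x i hx
  simpa [cnt, and_true] using h

lemma cntCorrect_split {M N : ℕ} (d : Fin N → (Fin M → Bool) × Bool × Bool)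
    (x : Fin M → Option Bool) (i : Fin M) (hx : x i = none) :
    cntCorrect d x = cntCorrect d (Function.update x i (some false))
      + cntCorrect d (Function.update x i (some true)) := by
  exact filter_belongs_split d (fun n => (d n).2.1 = (d n).2.2) x i hx

lemma mediant_lower (a b c e : ℚ) (hb : 0 < b) (he : 0 < e) :
    min (a / b) (c / e) ≤ (a + c) / (b + e) := by
  rcases le_total (a / b) (c / e) with h | h
  · rw [min_eq_left h]
    rw [div_le_div_iff₀ hb he] at h
    rw [div_le_div_iff₀ hb (by positivity)]
    nlinarith
  · rw [min_eq_right h]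
    rw [div_le_div_iff₀ he hb] at h
    rw [div_le_div_iff₀ he (by positivity)]
    nlinarith

lemma mediant_upper (a b c e : ℚ) (hb : 0 < b) (he : 0 < e) :
    (a + c) / (b + e) ≤ max (a / b) (c / e) := by
  rcases le_total (a / b) (c / e) with h | h
  · rw [max_eq_right h]
    rw [div_le_div_iff₀ hb he] at h
    rw [div_le_div_iff₀ (by positivity) he]
    nlinarith
  · rw [max_eq_left h]
    rw [div_le_div_iff₀ he hb] at h
    rw [div_le_div_iff₀ (by positivity) hb]
    nlinarith

lemma accuracy_between {M N : ℕ} (d : Fin N → (Fin M → Bool) × Bool × Bool)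
    (hvert : ∀ v : Fin M → Bool, 0 < cnt d (fun i => some (v i)))
    (x : Fin M → Option Bool) (i : Fin M) (hx : x i = none) :
    min (accuracy d (Function.update x i (some false)))
        (accuracy d (Function.update x i (some true))) ≤ accuracy d x ∧
    accuracy d x ≤ max (accuracy d (Function.update x i (some false)))
        (accuracy d (Function.update x i (some true))) := by
  have h0 : (0:ℚ) < (cnt d (Function.update x i (some false)) : ℚ) := by
    exact_mod_cast cnt_pos_of_vert d hvert _
  have h1 : (0:ℚ) < (cnt d (Function.update x i (some true)) : ℚ) := by
    exact_mod_cast cnt_pos_of_vert d hvert _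
  have hacc : accuracy d x =
      ((cntCorrect d (Function.update x i (some false)) : ℚ)
        + (cntCorrect d (Function.update x i (some true)) : ℚ))
      / ((cnt d (Function.update x i (some false)) : ℚ)
        + (cnt d (Function.update x i (some true)) : ℚ)) := by
    rw [accuracy, cnt_split d x i hx, cntCorrect_split d x i hx]
    push_cast
    ring_nf
  rw [hacc]
  exact ⟨mediant_lower _ _ _ _ h0 h1, mediant_upper _ _ _ _ h0 h1⟩

lemma accuracyMin_le {M N : ℕ} (d : Fin N → (Fin M → Bool) × Bool × Bool) (K : ℕ)
    (x : Fin M → Option Bool) (hx : x ∈ levelSet M K) :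
    accuracyMin d K ≤ accuracy d x := by
  have hne : (((levelSet M K).image (accuracy d))).Nonempty := ⟨_, Finset.mem_image_of_mem _ hx⟩
  rw [accuracyMin, ← Finset.coe_min' hne, WithTop.untopD_coe]
  exact Finset.min'_le _ _ (Finset.mem_image_of_mem _ hx)

lemma le_accuracyMax {M N : ℕ} (d : Fin N → (Fin M → Bool) × Bool × Bool) (K : ℕ)
    (x : Fin M → Option Bool) (hx : x ∈ levelSet M K) :
    accuracy d x ≤ accuracyMax d K := by
  have hne : (((levelSet M K).image (accuracy d))).Nonempty := ⟨_, Finset.mem_image_of_mem _ hx⟩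
  rw [accuracyMax, ← Finset.coe_max' hne, WithBot.unbotD_coe]
  exact Finset.le_max' _ _ (Finset.mem_image_of_mem _ hx)

lemma exists_accuracyMin {M N : ℕ} (d : Fin N → (Fin M → Bool) × Bool × Bool) (K : ℕ)
    (h : (levelSet M K).Nonempty) :
    ∃ x ∈ levelSet M K, accuracyMin d K = accuracy d x := by
  have hne : (((levelSet M K).image (accuracy d))).Nonempty := h.image _
  obtain ⟨x, hx, hax⟩ := Finset.mem_image.mp (Finset.min'_mem _ hne)
  exact ⟨x, hx, by rw [accuracyMin, ← Finset.coe_min' hne, WithTop.untopD_coe, hax]⟩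

lemma exists_accuracyMax {M N : ℕ} (d : Fin N → (Fin M → Bool) × Bool × Bool) (K : ℕ)
    (h : (levelSet M K).Nonempty) :
    ∃ x ∈ levelSet M K, accuracyMax d K = accuracy d x := by
  have hne : (((levelSet M K).image (accuracy d))).Nonempty := h.image _
  obtain ⟨x, hx, hax⟩ := Finset.mem_image.mp (Finset.max'_mem _ hne)
  exact ⟨x, hx, by rw [accuracyMax, ← Finset.coe_max' hne, WithBot.unbotD_coe, hax]⟩

lemma exists_star {M : ℕ} (x : Fin M → Option Bool) (K : ℕ) (hK : level x = K)
    (hK1 : 1 ≤ K) : ∃ i, x i = none := by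
  have : (Finset.univ.filter fun j => x j = none).Nonempty := by
    rw [← Finset.card_pos]
    unfold level at hK; omega
  obtain ⟨i, hi⟩ := this
  exact ⟨i, (Finset.mem_filter.mp hi).2⟩

lemma mem_levelSet_update {M : ℕ} (x : Fin M → Option Bool) (i : Fin M) (hx : x i = none)
    (K : ℕ) (hK : level x = K) (b : Bool) :
    Function.update x i (some b) ∈ levelSet M (K - 1) := by
  have := level_update_some x i hx b
  simp only [levelSet, Finset.mem_filter, Finset.mem_univ, true_and]
  omega

lemma accuracyMin_mono {M N : ℕ} (d : Fin N → (Fin M → Bool) × Bool × Bool)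
    (hvert : ∀ v : Fin M → Bool, 0 < cnt d (fun i => some (v i)))
    (K : ℕ) (hK1 : 1 ≤ K) (hKM : K ≤ M) :
    accuracyMin d (K - 1) ≤ accuracyMin d K := by
  obtain ⟨x, hxmem, hxeq⟩ := exists_accuracyMin d K (levelSet_nonempty M K hKM)
  rw [hxeq]
  have hlev : level x = K := by
    simpa [levelSet] using hxmem
  obtain ⟨i, hi⟩ := exists_star x K hlev hK1
  refine le_trans (le_min ?_ ?_) (accuracy_between d hvert x i hi).1
  · exact accuracyMin_le d (K-1) _ (mem_levelSet_update x i hi K hlev false)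
  · exact accuracyMin_le d (K-1) _ (mem_levelSet_update x i hi K hlev true)

lemma accuracyMax_mono {M N : ℕ} (d : Fin N → (Fin M → Bool) × Bool × Bool)
    (hvert : ∀ v : Fin M → Bool, 0 < cnt d (fun i => some (v i)))
    (K : ℕ) (hK1 : 1 ≤ K) (hKM : K ≤ M) :
    accuracyMax d K ≤ accuracyMax d (K - 1) := by
  obtain ⟨x, hxmem, hxeq⟩ := exists_accuracyMax d K (levelSet_nonempty M K hKM)
  rw [hxeq]
  have hlev : level x = K := by
    simpa [levelSet] using hxmem
  obtain ⟨i, hi⟩ := exists_star x K hlev hK1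
  refine le_trans (accuracy_between d hvert x i hi).2 (max_le ?_ ?_)
  · exact le_accuracyMax d (K-1) _ (mem_levelSet_update x i hi K hlev false)
  · exact le_accuracyMax d (K-1) _ (mem_levelSet_update x i hi K hlev true)

lemma accuracyMin_nonneg {M N : ℕ} (d : Fin N → (Fin M → Bool) × Bool × Bool) (K : ℕ)
    (hKM : K ≤ M) : 0 ≤ accuracyMin d K := by
  obtain ⟨x, _, hxeq⟩ := exists_accuracyMin d K (levelSet_nonempty M K hKM)
  rw [hxeq, accuracy]
  positivity

lemma accuracyMax_pos {M N : ℕ} (d : Fin N → (Fin M → Bool) × Bool × Bool)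
    (hvert : ∀ v : Fin M → Bool, 0 < cnt d (fun i => some (v i)))
    (hcorrect : ∃ n : Fin N, (d n).2.1 = (d n).2.2)
    (K : ℕ) (hKM : K ≤ M) : 0 < accuracyMax d K := by
  obtain ⟨n, hn⟩ := hcorrect
  obtain ⟨x, hlev, hbel⟩ := exists_containing M K hKM (d n).1
  have hcc : 0 < cntCorrect d x := by
    rw [cntCorrect, Finset.card_pos]
    exact ⟨n, by simp [hbel, hn]⟩
  have hpos : 0 < accuracy d x := by
    rw [accuracy]
    have := cnt_pos_of_vert d hvert x
    positivity
  exact lt_of_lt_of_le hpos (le_accuracyMax d K x (by simp [levelSet, hlev]))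

/-- If every vertex contains at least one instance and at least one instance
is correctly classified, the worst-case accuracy ratio is monotonically increasing and the
worst-case accuracy difference is monotonically decreasing in the level. -/
theorem accuracyRatio_accuracyDiff_mono (M N : ℕ) (hM : 0 < M) (hN : 0 < N)
    (d : Fin N → (Fin M → Bool) × Bool × Bool)
    (hvert : ∀ v : Fin M → Bool, 0 < cnt d (fun i => some (v i)))
    (hcorrect : ∃ n : Fin N, (d n).2.1 = (d n).2.2)
    (K : ℕ) (hK1 : 1 ≤ K) (hKM : K ≤ M) :
    accuracyRatio d (K - 1) ≤ accuracyRatio d K ∧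
      accuracyDiff d K ≤ accuracyDiff d (K - 1) := by
  constructor
  · unfold accuracyRatio
    exact div_le_div₀ (le_trans (accuracyMin_nonneg d (K-1) (by omega)) (accuracyMin_mono d hvert K hK1 hKM))
      (accuracyMin_mono d hvert K hK1 hKM)
      (accuracyMax_pos d hvert hcorrect K hKM)
      (accuracyMax_mono d hvert K hK1 hKM)
  · unfold accuracyDiff
    exact sub_le_sub (accuracyMax_mono d hvert K hK1 hKM) (accuracyMin_mono d hvert K hK1 hKM)
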